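/- Maximal distribution moment bound: Let Ê and Ẽ be sublinear expectations, Y ∈ ℝ^d with Ê[|Y|] = M_Y¹ < ∞, and suppose ζ ∈ ℝ^d satisfies Ẽ[ψ(ζ)] = max over q ∈ Q of ψ(q) for a bounded closed convex set Q ⊂ ℝ^d, and that Ê[⟨p,Y⟩] = max over q ∈ Q of ⟨p,q⟩ for all p ∈ ℝ^d. Then every q ∈ Q satisfies |q| ≤ M_Y¹, and consequently Ẽ[|ζ|^p] ≤ (M_Y¹)^p for every p > 0. -/

import Mathlib

theorem stmt_16 {Ω Ω' : Type*} (d : ℕ)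
    (E : (Ω → ℝ) → ℝ) (E' : (Ω' → ℝ) → ℝ)
    (hmono : ∀ X Y : Ω → ℝ, (∀ ω, X ω ≤ Y ω) → E X ≤ E Y)
    (hconst : ∀ c : ℝ, E (fun _ => c) = c)
    (hsub : ∀ X Y : Ω → ℝ, E (fun ω => X ω + Y ω) ≤ E X + E Y)
    (hpos : ∀ lam : ℝ, 0 ≤ lam → ∀ X : Ω → ℝ, E (fun ω => lam * X ω) = lam * E X)
    (hmono' : ∀ X Y : Ω' → ℝ, (∀ ω, X ω ≤ Y ω) → E' X ≤ E' Y)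
    (hconst' : ∀ c : ℝ, E' (fun _ => c) = c)
    (hsub' : ∀ X Y : Ω' → ℝ, E' (fun ω => X ω + Y ω) ≤ E' X + E' Y)
    (hpos' : ∀ lam : ℝ, 0 ≤ lam → ∀ X : Ω' → ℝ, E' (fun ω => lam * X ω) = lam * E' X)
    (Y : Ω → EuclideanSpace ℝ (Fin d)) (MY1 : ℝ)
    (hMY1 : E (fun ω => ‖Y ω‖) = MY1)
    (Q : Set (EuclideanSpace ℝ (Fin d)))
    (hQc : IsCompact Q) (hQconv : Convex ℝ Q) (hQne : Q.Nonempty)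
    (ζ : Ω' → EuclideanSpace ℝ (Fin d))
    (hζ : ∀ ψ : EuclideanSpace ℝ (Fin d) → ℝ, Continuous ψ →
      E' (fun ω => ψ (ζ ω)) = sSup (ψ '' Q))
    (hY : ∀ p : EuclideanSpace ℝ (Fin d),
      E (fun ω => inner ℝ p (Y ω)) = sSup ((fun q => (inner ℝ p q : ℝ)) '' Q)) :
    (∀ q ∈ Q, ‖q‖ ≤ MY1) ∧
    ∀ p : ℝ, 0 < p → E' (fun ω => ‖ζ ω‖ ^ p) ≤ MY1 ^ p := by

  have hMY1nonneg : 0 ≤ MY1 := by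
    rw [← hMY1, ← hconst 0]
    exact hmono _ _ fun ω => by simpa using norm_nonneg (Y ω)
  have hbound : ∀ q ∈ Q, ‖q‖ ≤ MY1 := by
    intro q hq
    have hsq : (inner ℝ q q : ℝ) ≤ sSup ((fun q' => (inner ℝ q q' : ℝ)) '' Q) := by
      apply le_csSup
      · exact (hQc.image ((innerSL ℝ q).continuous)).bddAbove
      · exact ⟨q, hq, rfl⟩
    have hE : E (fun ω => inner ℝ q (Y ω)) ≤ ‖q‖ * MY1 := by
      have h1 : E (fun ω => inner ℝ q (Y ω)) ≤ E (fun ω => ‖q‖ * ‖Y ω‖) :=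
        hmono _ _ fun ω => real_inner_le_norm q (Y ω)
      have h2 : E (fun ω => ‖q‖ * ‖Y ω‖) = ‖q‖ * MY1 := by
        rw [hpos ‖q‖ (norm_nonneg q) (fun ω => ‖Y ω‖), hMY1]
      linarith
    have key : ‖q‖ * ‖q‖ ≤ ‖q‖ * MY1 := by
      rw [← real_inner_self_eq_norm_mul_norm]
      calc (inner ℝ q q : ℝ) ≤ sSup ((fun q' => (inner ℝ q q' : ℝ)) '' Q) := hsq
        _ = E (fun ω => inner ℝ q (Y ω)) := (hY q).symm
        _ ≤ ‖q‖ * MY1 := hE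
    rcases eq_or_lt_of_le (norm_nonneg q) with h0 | h0
    · rw [← h0]; exact hMY1nonneg
    · exact le_of_mul_le_mul_left key h0
  refine ⟨hbound, fun p hp => ?_⟩
  have hψ : Continuous fun q : EuclideanSpace ℝ (Fin d) => ‖q‖ ^ p := by
    exact (continuous_iff_continuousAt.2 fun x =>
      Real.continuousAt_rpow_const x p (Or.inr hp.le)).comp continuous_norm
  rw [hζ _ hψ]
  apply Real.sSup_le
  · rintro x ⟨q, hq, rfl⟩
    exact Real.rpow_le_rpow (norm_nonneg q) (hbound q hq) hp.le
  · exact Real.rpow_nonneg hMY1nonneg p
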